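/- Caristi's fixed point theorem implies Li's Theorem 1, case (i): assuming that for every complete metric space X, every lower semicontinuous bounded-below ψ : X → ℝ, and every T : X → X with d(x,Tx) ≤ ψ(x) − ψ(Tx) for all x there is a fixed point of T, one can deduce that under the hypotheses of Theorem 1(i) (η(0)=0, φ lsc with φ(x) ≥ a·d(x,x₀)+β for some a ≥ 0, η nonnegative and nondecreasing on W = {d(x,y) : x,y ∈ X}, and η(t) ≥ c·t on {t ≥ 0 : η(t) ≤ ε} ∩ W for some c, ε > 0), every T with η(d(x,Tx)) ≤ φ(x) − φ(Tx) has a fixed point. -/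

import Mathlib

universe u

/-- Caristi's fixed point theorem implies Li's Theorem 1, case (i). -/
theorem caristi_implies_li_theorem1_i
    (caristi : ∀ (Y : Type u) [MetricSpace Y] [CompleteSpace Y] [Nonempty Y]
      (ψ : Y → ℝ), LowerSemicontinuous ψ → BddBelow (Set.range ψ) →
      ∀ S : Y → Y, (∀ y, dist y (S y) ≤ ψ y - ψ (S y)) → ∃ y, S y = y)
    {X : Type u} [MetricSpace X] [CompleteSpace X] [Nonempty X]
    (η : ℝ → ℝ) (hη0 : η 0 = 0)
    (φ : X → ℝ) (hlsc : LowerSemicontinuous φ)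
    (x₀ : X) (a β : ℝ) (ha : 0 ≤ a)
    (hφ : ∀ x, a * dist x x₀ + β ≤ φ x)
    (hηnn : ∀ t ∈ {t : ℝ | ∃ x y : X, dist x y = t}, 0 ≤ η t)
    (hηmono : ∀ s ∈ {t : ℝ | ∃ x y : X, dist x y = t},
      ∀ t ∈ {t : ℝ | ∃ x y : X, dist x y = t}, s ≤ t → η s ≤ η t)
    (c ε : ℝ) (hc : 0 < c) (hε : 0 < ε)
    (hgrow : ∀ t ∈ {t : ℝ | 0 ≤ t ∧ η t ≤ ε} ∩ {t : ℝ | ∃ x y : X, dist x y = t},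
      c * t ≤ η t)
    (T : X → X) (hT : ∀ x, η (dist x (T x)) ≤ φ x - φ (T x)) :
    ∃ x, T x = x := by
  -- φ is bounded below by β
  have hφβ : ∀ x, β ≤ φ x := fun x =>
    le_trans (by nlinarith [dist_nonneg (x := x) (y := x₀)]) (hφ x)
  have hrne : (Set.range φ).Nonempty := Set.range_nonempty _
  have hrbdd : BddBelow (Set.range φ) := ⟨β, by rintro _ ⟨x, rfl⟩; exact hφβ x⟩
  set m := sInf (Set.range φ) with hm
  have hmle : ∀ x, m ≤ φ x := fun x => csInf_le hrbdd ⟨x, rfl⟩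
  -- pick x₁ with φ x₁ < m + ε
  obtain ⟨_, ⟨x₁, rfl⟩, hx₁⟩ := exists_lt_of_csInf_lt hrne (show m < m + ε by linarith)
  -- φ decreases along T
  have hdec : ∀ x : X, φ (T x) ≤ φ x := by
    intro x
    have h0 : 0 ≤ η (dist x (T x)) := hηnn _ ⟨x, T x, rfl⟩
    linarith [hT x]
  -- the invariant sublevel set
  set Y : Set X := {x | φ x ≤ φ x₁} with hY
  have hYclosed : IsClosed Y := hlsc.isClosed_preimage (φ x₁)
  have hYne : Y.Nonempty := ⟨x₁, le_refl (φ x₁)⟩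
  have hTY : ∀ x ∈ Y, T x ∈ Y := fun x hx => le_trans (hdec x) hx
  -- key estimate on Y
  have hkey : ∀ x ∈ Y, c * dist x (T x) ≤ φ x - φ (T x) := by
    intro x hx
    have hηε : η (dist x (T x)) ≤ ε := by
      have := hT x
      have h1 : φ x ≤ φ x₁ := hx
      have h2 : m ≤ φ (T x) := hmle (T x)
      linarith
    have := hgrow (dist x (T x)) ⟨⟨dist_nonneg, hηε⟩, x, T x, rfl⟩
    linarith [hT x]
  -- set up the subtype
  haveI : CompleteSpace Y := hYclosed.completeSpace_coe
  haveI : Nonempty Y := hYne.to_subtype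
  set ψ : Y → ℝ := fun y => φ y.1 / c with hψ
  have hψlsc : LowerSemicontinuous ψ := by
    have h1 : LowerSemicontinuous fun y : Y => φ y.1 :=
      hlsc.comp continuous_subtype_val
    intro y r hr
    have := h1 y (r * c) ((lt_div_iff₀ hc).mp hr)
    filter_upwards [this] with z hz
    rw [hψ]
    simp only []
    exact (lt_div_iff₀ hc).mpr hz
  have hψbdd : BddBelow (Set.range ψ) := by
    refine ⟨β / c, ?_⟩
    rintro _ ⟨y, rfl⟩
    exact (div_le_div_iff_of_pos_right hc).mpr (hφβ y.1)
  -- the self-map on Y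
  set S : Y → Y := fun y => ⟨T y.1, hTY y.1 y.2⟩ with hS
  have hcar : ∀ y : Y, dist y (S y) ≤ ψ y - ψ (S y) := by
    intro y
    have hd : dist y (S y) = dist y.1 (T y.1) := rfl
    have := hkey y.1 y.2
    rw [hd, hψ]
    simp only [hS]
    rw [div_sub_div_same, le_div_iff₀ hc]
    linarith
  obtain ⟨y, hy⟩ := caristi Y ψ hψlsc hψbdd S hcar
  exact ⟨y.1, congrArg Subtype.val hy⟩
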